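/- Assume that 2^κ < ℵ_ω for every cardinal κ < ℵ_ω. Let X be a linearly Lindelöf topological space with tightness t(X) < ℵ_ω. Then every open cover of X has a countable subcover (so X is Lindelöf). -/

import Mathlib

open Set Cardinal Topology

universe u v

/-- A space is quasi-Lindelöf if every open cover has a countable subcover
(no separation axioms assumed). -/
def QuasiLindelofSp (X : Type u) [TopologicalSpace X] : Prop :=
  ∀ 𝒰 : Set (Set X), (∀ U ∈ 𝒰, IsOpen U) → ⋃₀ 𝒰 = Set.univ →
    ∃ 𝒱 ⊆ 𝒰, 𝒱.Countable ∧ ⋃₀ 𝒱 = Set.univ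

/-- Lindelöf in the sense of Engelking: regular (T3, including T1) and
every open cover has a countable subcover. -/
def EngLindelofSp (X : Type u) [TopologicalSpace X] : Prop :=
  RegularSpace X ∧ T1Space X ∧ QuasiLindelofSp X

/-- X is productively Lindelöf if X × Y is Lindelöf for every Lindelöf space Y. -/
def ProductivelyLindelofSp (X : Type u) [TopologicalSpace X] : Prop :=
  ∀ (Y : Type u) [TopologicalSpace Y], EngLindelofSp Y → EngLindelofSp (X × Y)

/-- X is productively quasi-Lindelöf if X × Y is quasi-Lindelöf for every Lindelöf space Y. -/
def ProductivelyQuasiLindelofSp (X : Type u) [TopologicalSpace X] : Prop :=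
  ∀ (Y : Type u) [TopologicalSpace Y], EngLindelofSp Y → QuasiLindelofSp (X × Y)

/-- X is powerfully Lindelöf if X^ω is Lindelöf. -/
def PowerfullyLindelofSp (X : Type u) [TopologicalSpace X] : Prop :=
  EngLindelofSp (ℕ → X)

/-- X is powerfully quasi-Lindelöf if X^ω is quasi-Lindelöf. -/
def PowerfullyQuasiLindelofSp (X : Type u) [TopologicalSpace X] : Prop :=
  QuasiLindelofSp (ℕ → X)

/-- Tightness of X is at most κ. -/
def TightnessLE (X : Type u) [TopologicalSpace X] (κ : Cardinal.{u}) : Prop :=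
  ∀ (A : Set X) (x : X), x ∈ closure A → ∃ B ⊆ A, #B ≤ κ ∧ x ∈ closure B

/-- X has countable tightness. -/
def CountableTightness (X : Type u) [TopologicalSpace X] : Prop :=
  ∀ (A : Set X) (x : X), x ∈ closure A → ∃ B ⊆ A, B.Countable ∧ x ∈ closure B

/-- The Lindelöf number of X is at most κ: every open cover has a subcover of size ≤ κ. -/
def LindelofNumberLE (X : Type u) [TopologicalSpace X] (κ : Cardinal.{u}) : Prop :=
  ∀ 𝒰 : Set (Set X), (∀ U ∈ 𝒰, IsOpen U) → ⋃₀ 𝒰 = Set.univ →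
    ∃ 𝒱 ⊆ 𝒰, #𝒱 ≤ κ ∧ ⋃₀ 𝒱 = Set.univ

/-- The weight of X is at most κ: there is a base of size ≤ κ. -/
def WeightLE (X : Type u) [TopologicalSpace X] (κ : Cardinal.{u}) : Prop :=
  ∃ B : Set (Set X), TopologicalSpace.IsTopologicalBasis B ∧ #B ≤ κ

/-- N is a network for X. -/
def IsNetwork (X : Type u) [TopologicalSpace X] (N : Set (Set X)) : Prop :=
  ∀ (x : X) (U : Set X), IsOpen U → x ∈ U → ∃ n ∈ N, x ∈ n ∧ n ⊆ U

/-- X is linearly Lindelöf: regular (incl. T1) and every open cover linearly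
ordered by inclusion has a countable subcover. -/
def LinearlyLindelofSp (X : Type u) [TopologicalSpace X] : Prop :=
  RegularSpace X ∧ T1Space X ∧
    ∀ 𝒰 : Set (Set X), (∀ U ∈ 𝒰, IsOpen U) → IsChain (· ⊆ ·) 𝒰 → ⋃₀ 𝒰 = Set.univ →
      ∃ 𝒱 ⊆ 𝒰, 𝒱.Countable ∧ ⋃₀ 𝒱 = Set.univ

/-- U ⊆ X^ω is a basic open set: a product of open sets, all but finitely many of
which equal X. -/
def IsBasicOpen (X : Type u) [TopologicalSpace X] (U : Set (ℕ → X)) : Prop :=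
  ∃ V : ℕ → Set X, (∀ i, IsOpen (V i)) ∧ {i | V i ≠ Set.univ}.Finite ∧
    U = Set.pi Set.univ V

/-- A family of subsets of Z is point-κ if every point belongs to at most κ members. -/
def PointLE {Z : Type u} (𝒲 : Set (Set Z)) (κ : Cardinal.{u}) : Prop :=
  ∀ z : Z, #({W ∈ 𝒲 | z ∈ W}) ≤ κ

/-- A non-empty space is zero-dimensional if it is T1 and has a base of clopen sets. -/
def ZeroDimensionalSp (Y : Type u) [TopologicalSpace Y] : Prop :=
  Nonempty Y ∧ T1Space Y ∧
    ∃ B : Set (Set Y), TopologicalSpace.IsTopologicalBasis B ∧ ∀ b ∈ B, IsClopen b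

/- auxiliary lemmas -/

lemma ll_regular_cover_reduce {X : Type u} [TopologicalSpace X] [RegularSpace X]
    (S : Set X) (𝒰 : Set (Set X)) (hop : ∀ U ∈ 𝒰, IsOpen U)
    (hcov : closure S ⊆ ⋃₀ 𝒰) :
    ∃ 𝒱 ⊆ 𝒰, #𝒱 ≤ 2 ^ #S ∧ closure S ⊆ ⋃₀ 𝒱 := by
  classical
  have hchoose : ∀ E : ↥{E : Set X | E ⊆ S ∧ ∃ U ∈ 𝒰, closure E ⊆ U},
      ∃ U ∈ 𝒰, closure E.1 ⊆ U := fun E => E.2.2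
  choose φ hφ1 hφ2 using hchoose
  refine ⟨Set.range φ, ?_, ?_, ?_⟩
  · rintro _ ⟨E, rfl⟩; exact hφ1 E
  · refine (mk_range_le).trans ?_
    have h1 : #(↥{E : Set X | E ⊆ S ∧ ∃ U ∈ 𝒰, closure E ⊆ U}) ≤ #(↥(𝒫 S)) :=
      Cardinal.mk_le_mk_of_subset (fun E hE => hE.1)
    exact h1.trans_eq (Cardinal.mk_powerset S)
  · intro y hy
    obtain ⟨U₀, hU₀, hyU₀⟩ := hcov hy
    obtain ⟨C, hCnhds, hCclosed, hCU⟩ :=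
      exists_mem_nhds_isClosed_subset ((hop U₀ hU₀).mem_nhds hyU₀)
    set V := interior C with hV
    have hyV : y ∈ V := mem_interior_iff_mem_nhds.2 hCnhds
    have hE : (S ∩ V) ∈ {E : Set X | E ⊆ S ∧ ∃ U ∈ 𝒰, closure E ⊆ U} := by
      refine ⟨inter_subset_left, U₀, hU₀, ?_⟩
      calc closure (S ∩ V) ⊆ closure C := closure_mono ((inter_subset_right).trans interior_subset)
        _ = C := hCclosed.closure_eq
        _ ⊆ U₀ := hCU
    have hycl : y ∈ closure (S ∩ V) := by
      have : y ∈ V ∩ closure S := ⟨hyV, hy⟩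
      have h2 := isOpen_interior.inter_closure this
      rwa [inter_comm] at h2
    refine ⟨φ ⟨_, hE⟩, ⟨⟨_, hE⟩, rfl⟩, ?_⟩
    exact hφ2 ⟨_, hE⟩ (hycl)

lemma ll_bounded_of_small {c : Cardinal.{u}} (hc : c.IsRegular)
    (s : Set c.ord.ToType) (hs : #s < c) : ∃ b, ∀ a ∈ s, a < b := by
  haveI : IsWellOrder c.ord.ToType (· < ·) := isWellOrder_lt
  have h : #s < (Ordinal.type ((· < ·) : c.ord.ToType → c.ord.ToType → Prop)).cof := by
    rwa [Ordinal.type_toType, hc.cof_eq]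
  exact not_isCofinal_iff.1 fun hcof => (Order.cof_le hcof).not_gt (by rwa [Ordinal.cof_type] at h)

lemma ll_tail_closure_point {X : Type u} [TopologicalSpace X] [Nonempty X]
    (hch : ∀ 𝒰 : Set (Set X), (∀ U ∈ 𝒰, IsOpen U) → IsChain (· ⊆ ·) 𝒰 → ⋃₀ 𝒰 = Set.univ →
      ∃ 𝒱 ⊆ 𝒰, 𝒱.Countable ∧ ⋃₀ 𝒱 = Set.univ)
    {c : Cardinal.{u}} (hreg : c.IsRegular) (hc : ℵ₀ < c)
    (g : c.ord.ToType → X) :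
    ∃ x : X, ∀ b, x ∈ closure (g '' Set.Ici b) := by
  classical
  by_contra h
  push_neg at h
  set O : c.ord.ToType → Set X := fun b => (closure (g '' Set.Ici b))ᶜ with hO
  have hmono : Monotone O := by
    intro b b' hbb'
    apply compl_subset_compl.2
    exact closure_mono (image_mono (Ici_subset_Ici.2 hbb'))
  obtain ⟨𝒱, h𝒱sub, h𝒱c, h𝒱cov⟩ := hch (Set.range O)
    (by rintro _ ⟨b, rfl⟩; exact (isClosed_closure).isOpen_compl)
    (by rintro _ ⟨b, rfl⟩ _ ⟨b', rfl⟩ _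
        rcases le_total b b' with hle | hle
        · exact Or.inl (hmono hle)
        · exact Or.inr (hmono hle))
    (by apply eq_univ_of_forall; intro x
        obtain ⟨b, hb⟩ := h x
        exact ⟨O b, ⟨b, rfl⟩, hb⟩)
  have hne : 𝒱.Nonempty := by
    obtain ⟨x⟩ := (inferInstance : Nonempty X)
    have : x ∈ ⋃₀ 𝒱 := h𝒱cov ▸ mem_univ x
    obtain ⟨V, hV, _⟩ := this
    exact ⟨V, hV⟩
  obtain ⟨e, he⟩ := h𝒱c.exists_eq_range hne
  have hbk : ∀ k : ℕ, ∃ b, O b = e k := by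
    intro k
    have : e k ∈ 𝒱 := he ▸ ⟨k, rfl⟩
    obtain ⟨b, hb⟩ := h𝒱sub this
    exact ⟨b, hb⟩
  choose bk hbk using hbk
  have hcard : #(Set.range bk) < c :=
    lt_of_le_of_lt (Cardinal.mk_le_aleph0_iff.2 (by exact Set.countable_range bk |>.to_subtype)) hc
  obtain ⟨bstar, hbstar⟩ := ll_bounded_of_small hreg (Set.range bk) hcard
  have : g bstar ∈ ⋃₀ 𝒱 := h𝒱cov ▸ mem_univ _
  obtain ⟨V, hV, hgV⟩ := this
  obtain ⟨k, rfl⟩ : ∃ k, e k = V := by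
    have := he ▸ hV
    obtain ⟨k, hk⟩ := this
    exact ⟨k, hk⟩
  rw [← hbk k] at hgV
  exact hgV (subset_closure ⟨bstar, le_of_lt (hbstar (bk k) ⟨k, rfl⟩), rfl⟩)

lemma ll_exists_escape_seq {T : Type u} {X : Type v} [Nonempty X] [LinearOrder T]
    [WellFoundedLT T] (Bad : (T → X) → T → Set X)
    (hmono : ∀ (f f' : T → X), ∀ b : T, (∀ a, a < b → f a = f' a) → Bad f b = Bad f' b)
    (hex : ∀ (f : T → X) (b : T), ∃ x, x ∉ Bad f b) :
    ∃ g : T → X, ∀ b, g b ∉ Bad g b := by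
  classical
  have wf : WellFounded ((· < ·) : T → T → Prop) := IsWellFounded.wf
  let ext : ∀ b : T, (∀ a, a < b → X) → (T → X) := fun b p a =>
    if h : a < b then p a h else Classical.arbitrary X
  let F : ∀ b : T, (∀ a, a < b → X) → X := fun b p => (hex (ext b p) b).choose
  refine ⟨wf.fix F, fun b => ?_⟩
  have heq : wf.fix F b = F b (fun a _ => wf.fix F a) := wf.fix_eq F b
  rw [heq]
  have hspec := (hex (ext b (fun a _ => wf.fix F a)) b).choose_spec
  have hBad : Bad (ext b (fun a _ => wf.fix F a)) b = Bad (wf.fix F) b := by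
    apply hmono
    intro a ha
    simp only [ext]
    rw [dif_pos ha]
  rw [← hBad]
  exact hspec

lemma ll_small_cover_countable {X : Type u} [TopologicalSpace X]
    (hch : ∀ 𝒰 : Set (Set X), (∀ U ∈ 𝒰, IsOpen U) → IsChain (· ⊆ ·) 𝒰 → ⋃₀ 𝒰 = Set.univ →
      ∃ 𝒱 ⊆ 𝒰, 𝒱.Countable ∧ ⋃₀ 𝒱 = Set.univ) :
    ∀ (n : ℕ) (𝒰 : Set (Set X)), (∀ U ∈ 𝒰, IsOpen U) → ⋃₀ 𝒰 = Set.univ →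
      #𝒰 ≤ Cardinal.aleph n →
      ∃ 𝒱 ⊆ 𝒰, 𝒱.Countable ∧ ⋃₀ 𝒱 = Set.univ := by
  classical
  intro n
  induction n with
  | zero =>
    intro 𝒰 hop hcov hcard
    refine ⟨𝒰, subset_rfl, ?_, hcov⟩
    rw [show ((0 : ℕ) : Ordinal) = 0 by simp, Cardinal.aleph_zero] at hcard
    exact Set.countable_coe_iff.1 (Cardinal.mk_le_aleph0_iff.1 hcard)
  | succ n ih =>
    intro 𝒰 hop hcov hcard
    rcases isEmpty_or_nonempty X with hX | hX
    · refine ⟨∅, empty_subset _, countable_empty, ?_⟩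
      rw [sUnion_empty, eq_comm, univ_eq_empty_iff]
      exact hX
    set c : Cardinal.{u} := Cardinal.aleph (n + 1 : ℕ) with hc
    have hcsucc : c = Order.succ (Cardinal.aleph n) := by
      rw [hc]
      rw [show ((n + 1 : ℕ) : Ordinal) = Order.succ (n : Ordinal) by
        rw [Nat.cast_succ, Ordinal.add_one_eq_succ]]
      exact Cardinal.aleph_succ _
    have hreg : c.IsRegular := by
      rw [hcsucc]; exact Cardinal.isRegular_succ (Cardinal.aleph0_le_aleph _)
    have haleph0 : ℵ₀ < c := by
      rw [hcsucc]
      exact (Cardinal.aleph0_le_aleph _).trans_lt (Order.lt_succ _)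
    -- `𝒰` is nonempty since it covers the nonempty space
    have h𝒰ne : Nonempty ↥𝒰 := by
      obtain ⟨x⟩ := hX
      have : x ∈ ⋃₀ 𝒰 := hcov ▸ mem_univ x
      obtain ⟨U, hU, _⟩ := this
      exact ⟨⟨U, hU⟩⟩
    -- a surjection from `c.ord.ToType` onto `𝒰`
    have hmk : #(↥𝒰) ≤ #(c.ord.ToType) := by
      rwa [Cardinal.mk_ord_toType]
    obtain ⟨f⟩ := Cardinal.le_def _ _ |>.1 hmk
    haveI := h𝒰ne
    let u : c.ord.ToType → Set X := fun b => ((Function.invFun (⇑f) b : ↥𝒰) : Set X)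
    have hu𝒰 : ∀ b, u b ∈ 𝒰 := fun b => (Function.invFun (⇑f) b).2
    have husurj : ∀ U ∈ 𝒰, ∃ b, u b = U := by
      intro U hU
      obtain ⟨b, hb⟩ := Function.invFun_surjective f.injective ⟨U, hU⟩
      exact ⟨b, congrArg Subtype.val hb⟩
    let W : c.ord.ToType → Set X := fun b => ⋃ (a : c.ord.ToType) (_ : a < b), u a
    have hWopen : ∀ b, IsOpen (W b) :=
      fun b => isOpen_iUnion fun a => isOpen_iUnion fun _ => hop _ (hu𝒰 a)
    have hWmono : Monotone W := by
      intro b b' hbb'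
      exact iUnion_mono fun a => iUnion_subset fun h => subset_iUnion (fun _ : a < b' => u a) (h.trans_le hbb')
    have hWcov : ⋃₀ (Set.range W) = Set.univ := by
      apply eq_univ_of_forall
      intro x
      have : x ∈ ⋃₀ 𝒰 := hcov ▸ mem_univ x
      obtain ⟨U, hU, hxU⟩ := this
      obtain ⟨a, rfl⟩ := husurj U hU
      obtain ⟨b, hb⟩ := ll_bounded_of_small hreg {a}
        ((Cardinal.mk_le_aleph0_iff.2 (by infer_instance)).trans_lt haleph0)
      exact ⟨W b, ⟨b, rfl⟩, mem_iUnion₂.2 ⟨a, hb a rfl, hxU⟩⟩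
    obtain ⟨𝒱, h𝒱sub, h𝒱c, h𝒱cov⟩ := hch (Set.range W)
      (by rintro _ ⟨b, rfl⟩; exact hWopen b)
      (by rintro _ ⟨b, rfl⟩ _ ⟨b', rfl⟩ _
          rcases le_total b b' with hle | hle
          · exact Or.inl (hWmono hle)
          · exact Or.inr (hWmono hle))
      hWcov
    have hne : 𝒱.Nonempty := by
      obtain ⟨x⟩ := hX
      have : x ∈ ⋃₀ 𝒱 := h𝒱cov ▸ mem_univ x
      obtain ⟨V, hV, _⟩ := this
      exact ⟨V, hV⟩
    obtain ⟨e, he⟩ := h𝒱c.exists_eq_range hne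
    have hbk : ∀ k : ℕ, ∃ b, W b = e k := by
      intro k
      have : e k ∈ 𝒱 := he ▸ ⟨k, rfl⟩
      obtain ⟨b, hb⟩ := h𝒱sub this
      exact ⟨b, hb⟩
    choose bk hbk using hbk
    have hcard2 : #(Set.range bk) < c :=
      lt_of_le_of_lt (Cardinal.mk_le_aleph0_iff.2 (by exact (Set.countable_range bk).to_subtype))
        haleph0
    obtain ⟨bstar, hbstar⟩ := ll_bounded_of_small hreg (Set.range bk) hcard2
    have hWsub : Set.univ ⊆ W bstar := by
      intro x _
      have : x ∈ ⋃₀ 𝒱 := h𝒱cov ▸ mem_univ x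
      obtain ⟨V, hV, hxV⟩ := this
      obtain ⟨k, hk⟩ : ∃ k, e k = V := by
        have := he ▸ hV
        obtain ⟨k, hk⟩ := this
        exact ⟨k, hk⟩
      have : x ∈ W (bk k) := by rw [hbk k, hk]; exact hxV
      exact hWmono (le_of_lt (hbstar (bk k) ⟨k, rfl⟩)) this
    -- the subfamily indexed below `bstar`
    set 𝒰' : Set (Set X) := u '' (Set.Iio bstar) with h𝒰'
    have h𝒰'sub : 𝒰' ⊆ 𝒰 := by rintro _ ⟨a, _, rfl⟩; exact hu𝒰 a
    have h𝒰'cov : ⋃₀ 𝒰' = Set.univ := by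
      apply eq_univ_of_forall
      intro x
      have hx : x ∈ W bstar := hWsub (mem_univ x)
      obtain ⟨a, ha, hxa⟩ := mem_iUnion₂.1 hx
      exact ⟨u a, ⟨a, ha, rfl⟩, hxa⟩
    have h𝒰'card : #(↥𝒰') ≤ Cardinal.aleph n := by
      have h1 : #(↥𝒰') ≤ #(↥(Set.Iio bstar)) := Cardinal.mk_image_le
      have h2 : #(↥(Set.Iio bstar)) < c := Cardinal.mk_Iio_ord_toType bstar
      have := h1.trans_lt h2
      rw [hcsucc] at this
      exact Order.lt_succ_iff.1 this
    obtain ⟨𝒱', h1, h2, h3⟩ := ih 𝒰' (fun U hU => hop U (h𝒰'sub hU)) h𝒰'cov h𝒰'card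
    exact ⟨𝒱', h1.trans h𝒰'sub, h2, h3⟩


/-- Assume 2^κ < ℵ_ω for every cardinal κ < ℵ_ω. Then every linearly
Lindelöf space with tightness less than ℵ_ω is Lindelöf. -/
theorem stmt8 (hexp : ∀ κ : Cardinal.{u}, κ < Cardinal.aleph Ordinal.omega0 →
      2 ^ κ < Cardinal.aleph Ordinal.omega0)
    (X : Type u) [TopologicalSpace X]
    (hlin : LinearlyLindelofSp X)
    (ht : ∃ κ : Cardinal.{u}, κ < Cardinal.aleph Ordinal.omega0 ∧ TightnessLE X κ) :
    QuasiLindelofSp X := by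
  classical
  obtain ⟨hregX, _ht1, hch⟩ := hlin
  obtain ⟨κ₀, hκ₀, htight⟩ := ht
  haveI := hregX
  intro 𝒰 hop hcov
  by_contra hno
  push_neg at hno
  rcases isEmpty_or_nonempty X with hX | hX
  · exact hno ∅ (empty_subset _) countable_empty
      (by rw [sUnion_empty, eq_comm, univ_eq_empty_iff]; exact hX)
  have hbig : ∀ 𝒲 ⊆ 𝒰, ⋃₀ 𝒲 = Set.univ → ¬(#𝒲 < Cardinal.aleph Ordinal.omega0) := by
    intro 𝒲 hsub hWcov hlt
    obtain ⟨i, hile⟩ : ∃ i : ↥(Set.Iio Ordinal.omega0), #𝒲 ≤ Cardinal.aleph i := by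
      by_contra hcon
      push_neg at hcon
      have hle : Cardinal.aleph Ordinal.omega0 ≤ #𝒲 := by
        rw [Cardinal.aleph_limit Ordinal.isSuccLimit_omega0]
        exact ciSup_le' fun a => (hcon a).le
      exact absurd (hlt.trans_le hle) (lt_irrefl _)
    obtain ⟨n, hn⟩ := Ordinal.lt_omega0.1 i.2
    rw [hn] at hile
    obtain ⟨𝒱, h1, h2, h3⟩ := ll_small_cover_countable hch n 𝒲
      (fun U hU => hop U (hsub hU)) hWcov hile
    exact hno 𝒱 (h1.trans hsub) h2 h3
  -- cardinal bookkeeping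
  set κ' : Cardinal.{u} := max κ₀ ℵ₀ with hκ'def
  have hκ'ω : κ' < Cardinal.aleph Ordinal.omega0 := by
    apply max_lt hκ₀
    rw [← Cardinal.aleph_zero]
    exact Cardinal.aleph_lt_aleph.2 Ordinal.omega0_pos
  have htight' : TightnessLE X κ' := by
    intro A x hx
    obtain ⟨B, h1, h2, h3⟩ := htight A x hx
    exact ⟨B, h1, h2.trans (le_max_left _ _), h3⟩
  set lam1 : Cardinal.{u} := 2 ^ κ' with hlam1def
  set lam2 : Cardinal.{u} := 2 ^ lam1 with hlam2def
  have hlam1ω : lam1 < Cardinal.aleph Ordinal.omega0 := hexp κ' hκ'ω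
  have hlam2ω : lam2 < Cardinal.aleph Ordinal.omega0 := hexp lam1 hlam1ω
  have hℵ₀κ' : ℵ₀ ≤ κ' := le_max_right _ _
  have hℵ₀lam1 : ℵ₀ ≤ lam1 := hℵ₀κ'.trans (Cardinal.cantor κ').le
  have hℵ₀lam2 : ℵ₀ ≤ lam2 := hℵ₀lam1.trans (Cardinal.cantor lam1).le
  set μ : Cardinal.{u} := Order.succ lam1 with hμdef
  have hμreg : μ.IsRegular := Cardinal.isRegular_succ hℵ₀lam1
  have hμℵ : ℵ₀ < μ := hℵ₀lam1.trans_lt (Order.lt_succ _)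
  have hμlam2 : μ ≤ lam2 := Order.succ_le_of_lt (Cardinal.cantor lam1)
  -- cover-reduction choice function
  have hVex : ∀ S : Set X, ∃ 𝒱 ⊆ 𝒰, #𝒱 ≤ 2 ^ #(↥S) ∧ closure S ⊆ ⋃₀ 𝒱 := fun S =>
    ll_regular_cover_reduce S 𝒰 hop (by rw [hcov]; exact subset_univ _)
  choose V hV1 hV2 hV3 using hVex
  haveI : Nonempty μ.ord.ToType := by
    rw [Ordinal.toType_nonempty_iff_ne_zero, ne_eq, Cardinal.ord_eq_zero]
    intro h
    exact absurd (hμℵ.trans_le h.le) (by simp)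
  -- at each stage a point escaping the chosen covers of all initial closures exists
  have hex : ∀ (f : μ.ord.ToType → X) (b : μ.ord.ToType),
      ∃ x, x ∉ ⋃ a ∈ Set.Iic b, ⋃₀ V (f '' Set.Iio a) := by
    intro f b
    by_contra hcon
    push_neg at hcon
    set 𝒲 : Set (Set X) := ⋃ a ∈ Set.Iic b, V (f '' Set.Iio a) with h𝒲
    have hWsub : 𝒲 ⊆ 𝒰 := by
      rw [h𝒲]; exact iUnion₂_subset fun a _ => hV1 _
    have hWcov : ⋃₀ 𝒲 = Set.univ := by
      apply eq_univ_of_forall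
      intro x
      obtain ⟨a, ha, hx2⟩ := mem_iUnion₂.1 (hcon x)
      obtain ⟨U, hU, hxU⟩ := hx2
      exact ⟨U, mem_iUnion₂.2 ⟨a, ha, hU⟩, hxU⟩
    have hWcard : #𝒲 ≤ lam2 := by
      haveI : Nonempty ↥(Set.Iic b) := ⟨⟨b, le_refl b⟩⟩
      have h1 := Cardinal.mk_biUnion_le (fun a : μ.ord.ToType => V (f '' Set.Iio a)) (Set.Iic b)
      have h2 : #(↥(Set.Iic b)) ≤ lam2 := by
        have h2a : #(↥(Set.Iic b)) ≤ #(μ.ord.ToType) := Cardinal.mk_set_le _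
        rw [Cardinal.mk_ord_toType] at h2a
        exact h2a.trans hμlam2
      have h3 : ∀ a : ↥(Set.Iic b), #(V (f '' Set.Iio (a : μ.ord.ToType))) ≤ lam2 := by
        intro a
        refine (hV2 _).trans ?_
        rw [hlam2def]
        apply Cardinal.power_le_power_left two_ne_zero
        have h4 : #(↥(f '' Set.Iio (a : μ.ord.ToType))) ≤ #(↥(Set.Iio (a : μ.ord.ToType))) :=
          Cardinal.mk_image_le
        have h5 : #(↥(Set.Iio (a : μ.ord.ToType))) < μ := Cardinal.mk_Iio_ord_toType _
        exact h4.trans (Order.lt_succ_iff.1 (lt_of_lt_of_eq h5 hμdef))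
      have h6 : ⨆ a : ↥(Set.Iic b), #(V (f '' Set.Iio (a : μ.ord.ToType))) ≤ lam2 := ciSup_le' h3
      calc #𝒲 ≤ #(↥(Set.Iic b)) * ⨆ a : ↥(Set.Iic b), #(V (f '' Set.Iio (a : μ.ord.ToType))) :=
            h1
        _ ≤ lam2 * lam2 := mul_le_mul' h2 h6
        _ = lam2 := Cardinal.mul_eq_self hℵ₀lam2
    exact hbig 𝒲 hWsub hWcov (hWcard.trans_lt hlam2ω)
  -- construct the "free-sequence" style function g
  obtain ⟨g, hg⟩ := ll_exists_escape_seq (T := μ.ord.ToType) (X := X)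
    (fun f b => ⋃ a ∈ Set.Iic b, ⋃₀ V (f '' Set.Iio a))
    (fun f f' b hff' => iUnion₂_congr fun a ha =>
      congrArg (fun S => ⋃₀ V S)
        (Set.image_congr fun x hx => hff' x (lt_of_lt_of_le hx ha)))
    hex
  have halpha : ∀ a b : μ.ord.ToType, a ≤ b → g b ∉ ⋃₀ V (g '' Set.Iio a) := by
    intro a b hab hmem
    exact hg b (mem_iUnion₂.2 ⟨a, hab, hmem⟩)
  -- a point in the closure of every tail
  obtain ⟨x, hx⟩ := ll_tail_closure_point hch hμreg hμℵ g
  have hxrange : x ∈ closure (Set.range g) := by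
    obtain ⟨b0⟩ := (inferInstance : Nonempty μ.ord.ToType)
    exact closure_mono (by rintro _ ⟨a, _, rfl⟩; exact ⟨a, rfl⟩) (hx b0)
  obtain ⟨B, hBsub, hBcard, hxB⟩ := htight' (Set.range g) x hxrange
  have hidx : ∀ y : ↥B, ∃ a : μ.ord.ToType, g a = (y : X) := fun y => hBsub y.2
  choose ι hι using hidx
  have hκ'μ : κ' < μ := (Cardinal.cantor κ').trans_le (Order.le_succ lam1)
  have hιcard : #(Set.range ι) < μ :=
    lt_of_le_of_lt (Cardinal.mk_range_le.trans hBcard) hκ'μ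
  obtain ⟨b₁, hb₁⟩ := ll_bounded_of_small hμreg (Set.range ι) hιcard
  have hBsub2 : B ⊆ g '' Set.Iio b₁ := by
    intro y hy
    exact ⟨ι ⟨y, hy⟩, hb₁ _ ⟨⟨y, hy⟩, rfl⟩, hι ⟨y, hy⟩⟩
  have hxW : x ∈ ⋃₀ V (g '' Set.Iio b₁) := (hV3 _) ((closure_mono hBsub2) hxB)
  have hWopen : IsOpen (⋃₀ V (g '' Set.Iio b₁)) :=
    isOpen_sUnion fun U hU => hop U (hV1 _ hU)
  have hdisj : g '' Set.Ici b₁ ⊆ (⋃₀ V (g '' Set.Iio b₁))ᶜ := by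
    rintro _ ⟨b, hb, rfl⟩
    exact halpha b₁ b hb
  have hxcl : x ∈ (⋃₀ V (g '' Set.Iio b₁))ᶜ :=
    (hWopen.isClosed_compl.closure_subset_iff.2 hdisj) (hx b₁)
  exact hxcl hxW
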